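/- The Lead or Delay map δ is a right action of the monoid A*×A* on the set H_A: for every h ∈ H_A, δ(h,(ε,ε)) = h, and for all f,f',g,g' ∈ A*, δ(δ(h,(f,g)),(f',g')) = δ(h,(ff',gg')). -/

import Mathlib

/-- Words over the alphabet `A`, i.e. elements of the free monoid `A*`. -/
abbrev Word (A : Type) := List A

/-- The set `H_A = (A* × {ε}) ∪ ({ε} × A*) ∪ {𝟎}`, encoded inside
`Option (A* × A*)`, where `none` is the absorbing element `𝟎` and
`some (h_l, h_r)` is the pair `(h_l, h_r)`. -/
abbrev LD (A : Type) := Option (Word A × Word A)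

/-- `h` belongs to `H_A`: it is `𝟎` or one of its two components is the empty word. -/
def LD.inHA {A : Type} (h : LD A) : Prop := ∀ p ∈ h, p.1 = [] ∨ p.2 = []

open Classical in
/-- The lead-or-delay map `δ : H_A × (A* × A*) → H_A`. -/
noncomputable def ldAct {A : Type} (h : LD A) (p : Word A × Word A) : LD A :=
  match h with
  | none => none
  | some (hl, hr) =>
      if (hr ++ p.2) <+: (hl ++ p.1) then
        some ((hl ++ p.1).drop (hr ++ p.2).length, ([] : Word A))
      else if (hl ++ p.1) <+: (hr ++ p.2) then
        some (([] : Word A), (hr ++ p.2).drop (hl ++ p.1).length)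
      else none

private lemma prefix_comparable {A : Type} {l₁ l₂ l₃ : List A}
    (h1 : l₁ <+: l₃) (h2 : l₂ <+: l₃) : l₁ <+: l₂ ∨ l₂ <+: l₁ := by
  rcases le_total l₁.length l₂.length with h | h
  · exact Or.inl (List.prefix_of_prefix_length_le h1 h2 h)
  · exact Or.inr (List.prefix_of_prefix_length_le h2 h1 h)

private lemma ldAct_lead {A : Type} (y d f g : Word A) :
    ldAct (some (d, [])) (f, g) = ldAct (some (y ++ d, y)) (f, g) := by
  classical
  have cA : (y ++ g <+: y ++ d ++ f) ↔ (g <+: d ++ f) := by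
    rw [List.append_assoc]; exact List.prefix_append_right_inj y
  have cB : (y ++ d ++ f <+: y ++ g) ↔ (d ++ f <+: g) := by
    rw [List.append_assoc]; exact List.prefix_append_right_inj y
  simp only [ldAct, List.nil_append, cA, cB]
  simp [List.append_assoc, List.length_append, List.drop_append, Nat.add_assoc, List.drop_eq_nil_of_le]

private lemma ldAct_delay {A : Type} (x d f g : Word A) :
    ldAct (some ([], d)) (f, g) = ldAct (some (x, x ++ d)) (f, g) := by
  classical
  have cA : (x ++ d ++ g <+: x ++ f) ↔ (d ++ g <+: f) := by
    rw [List.append_assoc]; exact List.prefix_append_right_inj x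
  have cB : (x ++ f <+: x ++ d ++ g) ↔ (f <+: d ++ g) := by
    rw [List.append_assoc]; exact List.prefix_append_right_inj x
  simp only [ldAct, List.nil_append, cA, cB]
  simp [List.append_assoc, List.length_append, List.drop_append, Nat.add_assoc, List.drop_eq_nil_of_le]

private lemma ldAct_norm {A : Type} (x y f g : Word A) :
    ldAct (ldAct (some (x, y)) ([], [])) (f, g) = ldAct (some (x, y)) (f, g) := by
  classical
  by_cases hp : y <+: x
  · obtain ⟨d, rfl⟩ := hp
    have : ldAct (some (y ++ d, y)) ([], []) = some (d, []) := by
      simp [ldAct, List.drop_append, List.drop_left]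
    rw [this, ldAct_lead y d f g]
  · by_cases hq : x <+: y
    · obtain ⟨d, rfl⟩ := hq
      have : ldAct (some (x, x ++ d)) ([], []) = some ([], d) := by
        simp only [ldAct, List.append_nil]
        rw [if_neg hp, if_pos (List.prefix_append x d), List.drop_left]
      rw [this, ldAct_delay x d f g]
    · have h1 : ¬ (y ++ g <+: x ++ f) := by
        intro h
        have := prefix_comparable ((List.prefix_append y g).trans h) (List.prefix_append x f)
        tauto
      have h2 : ¬ (x ++ f <+: y ++ g) := by
        intro h
        have := prefix_comparable ((List.prefix_append x f).trans h) (List.prefix_append y g)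
        tauto
      simp [ldAct, hp, hq, h1, h2]

/-- The lead-or-delay map `δ` is a right action of the monoid
`A* × A*` on `H_A`. -/
theorem ld_is_right_action {A : Type} (h : LD A) (hh : LD.inHA h) :
    ldAct h ([], []) = h ∧
    ∀ f f' g g' : Word A,
      ldAct (ldAct h (f, g)) (f', g') = ldAct h (f ++ f', g ++ g') := by
  classical
  constructor
  · match h with
    | none => simp [ldAct]
    | some (hl, hr) =>
        rcases hh (hl, hr) rfl with h1 | h1 <;> subst h1 <;> simp [ldAct]
  · intro f f' g g'
    match h with
    | none => simp [ldAct]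
    | some (hl, hr) =>
        have e1 : ldAct (some (hl, hr)) (f, g) =
            ldAct (some (hl ++ f, hr ++ g)) ([], []) := by simp [ldAct]
        have e2 : ldAct (some (hl ++ f, hr ++ g)) (f', g') =
            ldAct (some (hl, hr)) (f ++ f', g ++ g') := by
          simp [ldAct, List.append_assoc]
        rw [e1, ldAct_norm, e2]
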